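/- Let 2 ≤ m < n and let G ≤ SL(m,ℝ) be a subgroup whose standard action on ℝ^m is irreducible and which has scalar commutant. Then the centralizer of ι_J(G) in SL(n,ℝ) is exactly the set of block-diagonal matrices diag(a·I_m, S) with a ∈ ℝ, S an (n−m)×(n−m) real matrix, and a^m·det(S) = 1. -/

import Mathlib

open Matrix
open scoped Pointwise

abbrev SLR (n : ℕ) : Type := Matrix.SpecialLinearGroup (Fin n) ℝ

instance (n : ℕ) : TopologicalSpace (SLR n) :=
  TopologicalSpace.induced (fun g => (g : Matrix (Fin n) (Fin n) ℝ)) inferInstance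

/-- The index identification `Fin m ⊕ Fin (n-m) ≃ Fin n`. -/
def finBlockEquiv {m n : ℕ} (h : m ≤ n) : Fin m ⊕ Fin (n - m) ≃ Fin n :=
  finSumFinEquiv.trans (finCongr (Nat.add_sub_cancel' h))

/-- Upper-left block embedding `SL(m,ℝ) →* SL(n,ℝ)`, `g ↦ diag(g, I_{n-m})`. -/
noncomputable def iotaJ {m n : ℕ} (h : m ≤ n) : SLR m →* SLR n where
  toFun g :=
    ⟨(Matrix.reindex (finBlockEquiv h) (finBlockEquiv h))
        (Matrix.fromBlocks (g : Matrix (Fin m) (Fin m) ℝ) 0 0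
          (1 : Matrix (Fin (n - m)) (Fin (n - m)) ℝ)), by
      simp [Matrix.det_fromBlocks_zero₂₁]⟩
  map_one' := by
    apply Subtype.ext
    simp [Matrix.fromBlocks_one]
  map_mul' g₁ g₂ := by
    apply Subtype.ext
    show _ = (_ : Matrix (Fin n) (Fin n) ℝ) * _
    simp only [Matrix.SpecialLinearGroup.coe_mul, Matrix.reindex_apply]
    rw [Matrix.submatrix_mul_equiv _ _ _ ((finBlockEquiv h).symm) _,
      Matrix.fromBlocks_multiply]
    simp


/-- the centralizer of `ι_J(G)` in `SL(n,ℝ)`, for `G ≤ SL(m,ℝ)` acting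
irreducibly on `ℝ^m` with scalar commutant, is exactly the set of block-diagonal
matrices `diag(a·I_m, S)` with `a^m · det S = 1`. -/
theorem centralizer_of_image (m n : ℕ) (hm : 2 ≤ m) (hmn : m < n)
    (G : Subgroup (SLR m))
    (hirr : ∀ W : Submodule ℝ (Fin m → ℝ),
      (∀ g ∈ G, ∀ v ∈ W, (g : Matrix (Fin m) (Fin m) ℝ) *ᵥ v ∈ W) → W = ⊥ ∨ W = ⊤)
    (hcomm : ∀ X : Matrix (Fin m) (Fin m) ℝ,
      (∀ g ∈ G, X * (g : Matrix (Fin m) (Fin m) ℝ) = (g : Matrix (Fin m) (Fin m) ℝ) * X) →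
      ∃ a : ℝ, X = a • (1 : Matrix (Fin m) (Fin m) ℝ)) :
    ((Subgroup.centralizer ((G.map (iotaJ hmn.le) : Subgroup (SLR n)) : Set (SLR n))) :
        Set (SLR n)) =
      { x : SLR n | ∃ (a : ℝ) (S : Matrix (Fin (n - m)) (Fin (n - m)) ℝ),
          a ^ m * S.det = 1 ∧
          (x : Matrix (Fin n) (Fin n) ℝ) =
            (Matrix.reindex (finBlockEquiv hmn.le) (finBlockEquiv hmn.le))
              (Matrix.fromBlocks (a • (1 : Matrix (Fin m) (Fin m) ℝ)) 0 0 S) } := by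
  set e := finBlockEquiv hmn.le with he
  -- G is not the trivial group (as matrices)
  have hnontriv : ¬ (∀ g ∈ G, (g : Matrix (Fin m) (Fin m) ℝ) = 1) := by
    intro htriv
    obtain ⟨a, ha⟩ := hcomm (Matrix.single ⟨0, by omega⟩ ⟨1, by omega⟩ 1)
      (fun g hg => by rw [htriv g hg, mul_one, one_mul])
    have := congrFun (congrFun ha ⟨0, by omega⟩) ⟨1, by omega⟩
    simp [Matrix.single, Matrix.one_apply, Fin.ext_iff] at this
  ext x
  simp only [SetLike.mem_coe, Subgroup.mem_centralizer_iff, Set.mem_setOf_eq]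
  constructor
  · intro hx
    set M := (x : Matrix (Fin n) (Fin n) ℝ).submatrix e e with hMdef
    have hxM : (x : Matrix (Fin n) (Fin n) ℝ) = (Matrix.reindex e e) M := by
      simp [hMdef]
    have key : ∀ g ∈ G,
        Matrix.fromBlocks (g : Matrix (Fin m) (Fin m) ℝ) 0 0
            (1 : Matrix (Fin (n - m)) (Fin (n - m)) ℝ) * M
          = M * Matrix.fromBlocks (g : Matrix (Fin m) (Fin m) ℝ) 0 0 1 := by
      intro g hg
      have h1 := hx (iotaJ hmn.le g) ⟨g, hg, rfl⟩
      have h2 : ((iotaJ hmn.le g : SLR n) : Matrix (Fin n) (Fin n) ℝ)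
            * (x : Matrix (Fin n) (Fin n) ℝ)
          = (x : Matrix (Fin n) (Fin n) ℝ)
            * ((iotaJ hmn.le g : SLR n) : Matrix (Fin n) (Fin n) ℝ) := by
        exact_mod_cast congrArg (fun y : SLR n => (y : Matrix (Fin n) (Fin n) ℝ)) h1
      set Q := ((iotaJ hmn.le g : SLR n) : Matrix (Fin n) (Fin n) ℝ) with hQ
      have hQee : Q.submatrix e e
          = Matrix.fromBlocks (g : Matrix (Fin m) (Fin m) ℝ) 0 0
              (1 : Matrix (Fin (n - m)) (Fin (n - m)) ℝ) := by
        rw [hQ]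
        show ((Matrix.reindex e e) (Matrix.fromBlocks (g : Matrix (Fin m) (Fin m) ℝ) 0 0
          (1 : Matrix (Fin (n - m)) (Fin (n - m)) ℝ))).submatrix e e = _
        simp [Matrix.submatrix_submatrix]
      calc Matrix.fromBlocks (g : Matrix (Fin m) (Fin m) ℝ) 0 0 1 * M
          = Q.submatrix e e * (x : Matrix (Fin n) (Fin n) ℝ).submatrix e e := by
            rw [hQee, hMdef]
        _ = (Q * (x : Matrix (Fin n) (Fin n) ℝ)).submatrix e e :=
            Matrix.submatrix_mul_equiv _ _ _ _ _
        _ = ((x : Matrix (Fin n) (Fin n) ℝ) * Q).submatrix e e := by rw [h2]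
        _ = (x : Matrix (Fin n) (Fin n) ℝ).submatrix e e * Q.submatrix e e :=
            (Matrix.submatrix_mul_equiv _ _ _ _ _).symm
        _ = M * Matrix.fromBlocks (g : Matrix (Fin m) (Fin m) ℝ) 0 0 1 := by
            rw [hQee, hMdef]
    -- block equations
    have hblocks : ∀ g ∈ G,
        (g : Matrix (Fin m) (Fin m) ℝ) * M.toBlocks₁₁ = M.toBlocks₁₁ * g ∧
        (g : Matrix (Fin m) (Fin m) ℝ) * M.toBlocks₁₂ = M.toBlocks₁₂ ∧
        M.toBlocks₂₁ = M.toBlocks₂₁ * (g : Matrix (Fin m) (Fin m) ℝ) := by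
      intro g hg
      have := key g hg
      rw [← Matrix.fromBlocks_toBlocks M, Matrix.fromBlocks_multiply,
        Matrix.fromBlocks_multiply] at this
      rw [Matrix.fromBlocks_inj] at this
      obtain ⟨e11, e12, e21, _⟩ := this
      refine ⟨by simpa using e11, by simpa using e12, by simpa using e21⟩
    -- A is scalar
    obtain ⟨a, hA⟩ := hcomm M.toBlocks₁₁ (fun g hg => ((hblocks g hg).1).symm
      )
    -- B = 0
    have hB : M.toBlocks₁₂ = 0 := by
      set W : Submodule ℝ (Fin m → ℝ) :=
        { carrier := {v | ∀ g ∈ G, (g : Matrix (Fin m) (Fin m) ℝ) *ᵥ v = v}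
          add_mem' := fun hv hw g hg => by
            simp [Matrix.mulVec_add, hv g hg, hw g hg]
          zero_mem' := fun g hg => by simp
          smul_mem' := fun c v hv g hg => by
            simp [Matrix.mulVec_smul, hv g hg] } with hW
      have hWinv : ∀ g ∈ G, ∀ v ∈ W, (g : Matrix (Fin m) (Fin m) ℝ) *ᵥ v ∈ W := by
        intro g hg v hv h hh
        rw [hv g hg]; exact hv h hh
      rcases hirr W hWinv with hbot | htop
      · ext i j
        have hcol : (fun i => M.toBlocks₁₂ i j) ∈ W := by
          intro g hg
          have := (hblocks g hg).2.1
          funext i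
          calc ((g : Matrix (Fin m) (Fin m) ℝ) *ᵥ fun i => M.toBlocks₁₂ i j) i
              = ((g : Matrix (Fin m) (Fin m) ℝ) * M.toBlocks₁₂) i j := by
                simp [Matrix.mul_apply, Matrix.mulVec, dotProduct]
            _ = M.toBlocks₁₂ i j := by rw [this]
        rw [hbot] at hcol
        simpa using congrFun hcol i
      · exfalso
        apply hnontriv
        intro g hg
        ext i j
        have : (g : Matrix (Fin m) (Fin m) ℝ) *ᵥ Pi.single j 1 = Pi.single j 1 := by
          have : (Pi.single j 1 : Fin m → ℝ) ∈ W := htop ▸ Submodule.mem_top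
          exact this g hg
        have := congrFun this i
        simpa [Matrix.mulVec_single, Matrix.one_apply, Pi.single_apply] using this
    -- C = 0
    have hC : M.toBlocks₂₁ = 0 := by
      set U : Submodule ℝ (Fin m → ℝ) :=
        Submodule.span ℝ {v | ∃ g ∈ G, ∃ w, v = (g : Matrix (Fin m) (Fin m) ℝ) *ᵥ w - w}
        with hU
      have hUinv : ∀ g ∈ G, ∀ v ∈ U, (g : Matrix (Fin m) (Fin m) ℝ) *ᵥ v ∈ U := by
        intro g hg v hv
        have : Submodule.map ((g : Matrix (Fin m) (Fin m) ℝ).mulVecLin) U ≤ U := by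
          rw [hU, Submodule.map_span, Submodule.span_le]
          rintro _ ⟨_, ⟨h, hh, w, rfl⟩, rfl⟩
          have expand : (g : Matrix (Fin m) (Fin m) ℝ).mulVecLin
                ((h : Matrix (Fin m) (Fin m) ℝ) *ᵥ w - w)
              = (((g * h : SLR m) : Matrix (Fin m) (Fin m) ℝ) *ᵥ w - w)
                - ((g : Matrix (Fin m) (Fin m) ℝ) *ᵥ w - w) := by
            simp [Matrix.mulVecLin_apply, Matrix.mulVec_sub, Matrix.mulVec_mulVec]
          rw [expand]
          exact sub_mem (Submodule.subset_span ⟨g * h, mul_mem hg hh, w, rfl⟩)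
            (Submodule.subset_span ⟨g, hg, w, rfl⟩)
        exact this ⟨v, hv, rfl⟩
      rcases hirr U hUinv with hbot | htop
      · exfalso
        apply hnontriv
        intro g hg
        ext i j
        have hmem : (g : Matrix (Fin m) (Fin m) ℝ) *ᵥ Pi.single j 1 - Pi.single j 1 ∈ U :=
          Submodule.subset_span ⟨g, hg, Pi.single j 1, rfl⟩
        rw [hbot, Submodule.mem_bot, sub_eq_zero] at hmem
        have := congrFun hmem i
        simpa [Matrix.mulVec_single, Matrix.one_apply, Pi.single_apply] using this
      · ext i j
        have hker : ∀ v ∈ U, M.toBlocks₂₁ *ᵥ v = 0 := by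
          intro v hv
          induction hv using Submodule.span_induction with
          | mem v hv =>
            obtain ⟨g, hg, w, rfl⟩ := hv
            rw [Matrix.mulVec_sub, Matrix.mulVec_mulVec, ← (hblocks g hg).2.2, sub_self]
          | zero => simp
          | add v w _ _ hv hw => rw [Matrix.mulVec_add, hv, hw, add_zero]
          | smul c v _ hv => rw [Matrix.mulVec_smul, hv, smul_zero]
        have := congrFun (hker (Pi.single j 1) (htop ▸ Submodule.mem_top)) i
        simpa [Matrix.mulVec_single] using this
    refine ⟨a, M.toBlocks₂₂, ?_, ?_⟩
    · have hdet : (x : Matrix (Fin n) (Fin n) ℝ).det = 1 := x.2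
      rw [hxM] at hdet
      rw [← Matrix.fromBlocks_toBlocks M, hA, hB, hC] at hdet
      simpa [Matrix.det_fromBlocks_zero₂₁, Matrix.det_smul] using hdet
    · rw [hxM]
      conv_lhs => rw [← Matrix.fromBlocks_toBlocks M, hA, hB, hC]
  · rintro ⟨a, S, hdet, hx⟩
    rintro y ⟨g, hg, rfl⟩
    apply Subtype.ext
    show ((iotaJ hmn.le g : SLR n) : Matrix (Fin n) (Fin n) ℝ) * x
        = (x : Matrix (Fin n) (Fin n) ℝ) * _
    rw [hx]
    show (Matrix.reindex e e) _ * (Matrix.reindex e e) _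
        = (Matrix.reindex e e) _ * (Matrix.reindex e e) _
    simp only [Matrix.reindex_apply]
    rw [Matrix.submatrix_mul_equiv _ _ _ e.symm, Matrix.submatrix_mul_equiv _ _ _ e.symm,
      Matrix.fromBlocks_multiply, Matrix.fromBlocks_multiply]
    congr 2 <;> simp [smul_mul_assoc, mul_smul_comm]
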